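/- The ceiling inequality underlying the ⌈ω/Cap⌉ bound: for natural numbers ω, Cap ≥ 1, if a multiset of unit requests has maximum edge load ω and is partitioned into k groups each with maximum edge load at most Cap, then k ≥ ⌈ω/Cap⌉; conversely, by coloring the corresponding interval graph with ω colors and bundling colors into groups of Cap, a partition into exactly ⌈ω/Cap⌉ groups each of maximum edge load at most Cap exists. -/

import Mathlib

open Finset

/-- Greedy coloring of intervals: if every edge is in at most `ω` intervals,
there is a proper coloring with `ω` colors. -/
lemma exists_proper_coloring (n : ℕ) :
    ∀ (m : ℕ) (lo hi : Fin m → Fin n), (∀ j, lo j ≤ hi j) →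
    ∀ (ω : ℕ),
      (∀ e : Fin n, (Finset.univ.filter (fun j => lo j ≤ e ∧ e ≤ hi j)).card ≤ ω) →
      ∃ c : Fin m → Fin ω, ∀ i i', i ≠ i' →
        (∃ e : Fin n, (lo i ≤ e ∧ e ≤ hi i) ∧ (lo i' ≤ e ∧ e ≤ hi i')) →
        c i ≠ c i' := by
  intro m
  induction m with
  | zero =>
      intro lo hi _ ω _
      exact ⟨fun i => i.elim0, fun i => i.elim0⟩
  | succ m ih =>
      intro lo hi hlh ω hub
      -- pick index with maximal `lo`
      obtain ⟨j, -, hjmax⟩ := Finset.exists_max_image (univ : Finset (Fin (m+1))) lo ⟨0, mem_univ 0⟩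
      set lo' : Fin m → Fin n := fun k => lo (j.succAbove k) with hlo'
      set hi' : Fin m → Fin n := fun k => hi (j.succAbove k) with hhi'
      obtain ⟨c', hc'⟩ := ih lo' hi' (fun k => hlh _) ω (by
        intro e
        have : (univ.filter (fun k => lo' k ≤ e ∧ e ≤ hi' k)).card
            ≤ (univ.filter (fun i : Fin (m+1) => lo i ≤ e ∧ e ≤ hi i)).card := by
          apply Finset.card_le_card_of_injOn (fun k => j.succAbove k)
          · intro k hk
            simp only [Finset.mem_coe, mem_filter, mem_univ, true_and] at hk ⊢
            exact hk
          · intro a _ b _ hab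
            exact Fin.succAbove_right_injective hab
        exact this.trans (hub e))
      -- intervals (other than j) containing lo j
      set T : Finset (Fin m) := univ.filter (fun k => lo' k ≤ lo j ∧ lo j ≤ hi' k) with hT
      have hTcard : T.card < ω := by
        have hmap : T.card = ((univ.filter
            (fun i : Fin (m+1) => lo i ≤ lo j ∧ lo j ≤ hi i)).erase j).card := by
          apply Finset.card_bij (fun k _ => j.succAbove k)
          · intro k hk
            simp only [hT, mem_filter, mem_univ, true_and] at hk
            simp only [mem_erase, mem_filter, mem_univ, true_and]
            exact ⟨Fin.succAbove_ne j k, hk⟩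
          · intro a _ b _ hab
            exact Fin.succAbove_right_injective hab
          · intro i hi''
            simp only [mem_erase, mem_filter, mem_univ, true_and] at hi''
            obtain ⟨k, hk⟩ := Fin.exists_succAbove_eq hi''.1
            refine ⟨k, ?_, hk⟩
            simp only [hT, mem_filter, mem_univ, true_and, hlo', hhi', hk]
            exact hi''.2
        have hjmem : j ∈ univ.filter (fun i : Fin (m+1) => lo i ≤ lo j ∧ lo j ≤ hi i) := by
          simp [hlh j]
        have := Finset.card_erase_lt_of_mem hjmem
        have h2 := hub (lo j)
        omega
      -- pick a free color
      have hfree : ∃ x : Fin ω, x ∉ T.image c' := by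
        by_contra h
        push_neg at h
        have : (univ : Finset (Fin ω)) ⊆ T.image c' := fun x _ => h x
        have := Finset.card_le_card this
        have h2 := Finset.card_image_le (s := T) (f := c')
        simp only [Finset.card_univ, Fintype.card_fin] at this
        omega
      obtain ⟨x, hx⟩ := hfree
      classical
      set c : Fin (m+1) → Fin ω := fun i =>
        if h : i = j then x else c' (Classical.choose (Fin.exists_succAbove_eq h)) with hc
      have hcs : ∀ k, c (j.succAbove k) = c' k := by
        intro k
        have hne : j.succAbove k ≠ j := Fin.succAbove_ne j k
        simp only [hc, dif_neg hne]
        congr 1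
        have := Classical.choose_spec (Fin.exists_succAbove_eq hne)
        exact Fin.succAbove_right_injective this
      have hcj : c j = x := by simp [hc]
      refine ⟨c, ?_⟩
      intro i i' hne hov
      obtain ⟨e, ⟨h1, h2⟩, h3, h4⟩ := hov
      -- helper: if i ≠ j overlaps j at e, then interval i contains lo j
      have key : ∀ i₀ : Fin (m+1), ∀ k : Fin m, i₀ = j.succAbove k →
          (lo i₀ ≤ e ∧ e ≤ hi i₀) → (lo j ≤ e ∧ e ≤ hi j) → k ∈ T := by
        intro i₀ k hk ⟨ha, hb⟩ ⟨hc1, hd⟩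
        simp only [hT, mem_filter, mem_univ, true_and, hlo', hhi', ← hk]
        exact ⟨hjmax i₀ (mem_univ _), le_trans hc1 hb⟩
      by_cases hi1 : i = j
      · subst hi1
        obtain ⟨k, hk⟩ := Fin.exists_succAbove_eq hne.symm
        rw [hcj, ← hk, hcs]
        intro hxeq
        exact hx (hxeq ▸ Finset.mem_image_of_mem c' (key i' k hk.symm ⟨h3, h4⟩ ⟨h1, h2⟩))
      · by_cases hi2 : i' = j
        · subst hi2
          obtain ⟨k, hk⟩ := Fin.exists_succAbove_eq hi1
          rw [hcj, ← hk, hcs]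
          intro hxeq
          exact hx (hxeq ▸ Finset.mem_image_of_mem c' (key i k hk.symm ⟨h1, h2⟩ ⟨h3, h4⟩))
        · obtain ⟨k, hk⟩ := Fin.exists_succAbove_eq hi1
          obtain ⟨k', hk'⟩ := Fin.exists_succAbove_eq hi2
          subst hk hk'
          rw [hcs, hcs]
          exact hc' k k' (fun hkk => hne (by rw [hkk]))
            ⟨e, ⟨h1, h2⟩, h3, h4⟩

/-- **The `⌈ω/Cap⌉` bound for grouping unit requests.**
Unit requests are intervals `[lo j, hi j]` of edges of a path with `n` edges;
the edge load at `e` of a group is the number of its requests containing `e`,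
and `ω` is the maximum edge load of the whole multiset (with `IsGreatest`
witnessing it).  If the requests are partitioned into `k` groups
(`f : Fin m → Fin k`) each having maximum edge load at most `Cap`, then
`k ≥ ⌈ω/Cap⌉`.  Conversely (by coloring the interval graph with `ω` colors and
bundling `Cap` color classes per group) there is a partition into exactly
`⌈ω/Cap⌉` groups each of maximum edge load at most `Cap`. -/
theorem ceil_load_partition_bound
    (n m Cap : ℕ) (hCap : 0 < Cap)
    (lo hi : Fin m → Fin n) (hlh : ∀ j, lo j ≤ hi j)
    (ω : ℕ)
    (hω : IsGreatest {w : ℕ | ∃ e : Fin n,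
        w = (Finset.univ.filter (fun j => lo j ≤ e ∧ e ≤ hi j)).card} ω) :
    (∀ (k : ℕ) (f : Fin m → Fin k),
        (∀ (t : Fin k) (e : Fin n),
          (Finset.univ.filter (fun j => f j = t ∧ lo j ≤ e ∧ e ≤ hi j)).card ≤ Cap) →
        (ω + Cap - 1) / Cap ≤ k) ∧
    (∃ f : Fin m → Fin ((ω + Cap - 1) / Cap),
        ∀ (t : Fin ((ω + Cap - 1) / Cap)) (e : Fin n),
          (Finset.univ.filter (fun j => f j = t ∧ lo j ≤ e ∧ e ≤ hi j)).card ≤ Cap) := by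
  classical
  obtain ⟨⟨e₀, he₀⟩, hub⟩ := hω
  have hub' : ∀ e : Fin n,
      (Finset.univ.filter (fun j => lo j ≤ e ∧ e ≤ hi j)).card ≤ ω := by
    intro e; exact hub ⟨e, rfl⟩
  constructor
  · -- lower bound
    intro k f hf
    have hsum : (Finset.univ.filter (fun j => lo j ≤ e₀ ∧ e₀ ≤ hi j)).card
        = ∑ t : Fin k,
          (Finset.univ.filter (fun j => f j = t ∧ lo j ≤ e₀ ∧ e₀ ≤ hi j)).card := by
      rw [Finset.card_eq_sum_card_fiberwise (f := f)
        (t := (Finset.univ : Finset (Fin k))) (fun j _ => Finset.mem_univ _)]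
      apply Finset.sum_congr rfl
      intro t _
      congr 1
      ext j
      simp only [Finset.mem_filter, Finset.mem_univ, true_and]
      tauto
    have hle : ω ≤ k * Cap := by
      rw [he₀, hsum]
      calc ∑ t : Fin k,
          (Finset.univ.filter (fun j => f j = t ∧ lo j ≤ e₀ ∧ e₀ ≤ hi j)).card
          ≤ ∑ _t : Fin k, Cap := Finset.sum_le_sum (fun t _ => hf t e₀)
        _ = k * Cap := by simp [Finset.sum_const, Finset.card_univ, mul_comm]
    by_contra hcon
    push_neg at hcon
    have h3 : ((ω + Cap - 1) / Cap) * Cap ≤ ω + Cap - 1 := Nat.div_mul_le_self _ _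
    have h2 : (k + 1) * Cap ≤ ((ω + Cap - 1) / Cap) * Cap :=
      Nat.mul_le_mul_right _ hcon
    have h6 : (k + 1) * Cap = k * Cap + Cap := by ring
    omega
  · -- upper bound: coloring
    have hωq : ω ≤ ((ω + Cap - 1) / Cap) * Cap := by
      have h1 := Nat.div_add_mod (ω + Cap - 1) Cap
      have h2 := Nat.mod_lt (ω + Cap - 1) hCap
      have h7 : ((ω + Cap - 1) / Cap) * Cap = Cap * ((ω + Cap - 1) / Cap) := by ring
      omega
    obtain ⟨c, hc⟩ := exists_proper_coloring n m lo hi hlh ω hub'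
    have hlt : ∀ j, (c j : ℕ) / Cap < (ω + Cap - 1) / Cap := by
      intro j
      rw [Nat.div_lt_iff_lt_mul hCap]
      exact lt_of_lt_of_le (c j).2 hωq
    refine ⟨fun j => ⟨(c j : ℕ) / Cap, hlt j⟩, ?_⟩
    intro t e
    have hinj : Set.InjOn (fun j => (⟨(c j : ℕ) % Cap, Nat.mod_lt _ hCap⟩ : Fin Cap))
        (Finset.univ.filter (fun j =>
          (⟨(c j : ℕ) / Cap, hlt j⟩ : Fin ((ω + Cap - 1) / Cap)) = t
            ∧ lo j ≤ e ∧ e ≤ hi j)) := by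
      intro a ha b hb hab
      simp only [Finset.coe_filter, Set.mem_setOf_eq, Finset.mem_univ, true_and] at ha hb
      by_contra hne
      have hcab : c a ≠ c b := hc a b hne ⟨e, ⟨ha.2.1, ha.2.2⟩, hb.2.1, hb.2.2⟩
      have hdiv : (c a : ℕ) / Cap = (c b : ℕ) / Cap := by
        have := congrArg Fin.val (ha.1.trans hb.1.symm)
        simpa using this
      have hmod : (c a : ℕ) % Cap = (c b : ℕ) % Cap := by
        have := congrArg Fin.val hab
        simpa using this
      apply hcab
      apply Fin.ext
      have e1 := Nat.div_add_mod (c a : ℕ) Cap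
      have e2 := Nat.div_add_mod (c b : ℕ) Cap
      rw [hdiv, hmod] at e1
      omega
    calc (Finset.univ.filter (fun j =>
          (⟨(c j : ℕ) / Cap, hlt j⟩ : Fin ((ω + Cap - 1) / Cap)) = t
            ∧ lo j ≤ e ∧ e ≤ hi j)).card
        ≤ (Finset.univ : Finset (Fin Cap)).card :=
          Finset.card_le_card_of_injOn _ (fun j _ => Finset.mem_univ _) hinj
      _ = Cap := by simp
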